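/- For Hermitian k×k matrices A and B with decreasingly ordered eigenvalues, for indices i ≤ j ≤ k one has λ_i(A+B) ≥ λ_j(A) + λ_{k+i-j}(B). -/

import Mathlib

open Matrix Finset

noncomputable section WeylAux

variable {k : ℕ}

/-- The real quadratic form of a matrix. -/
noncomputable def quadForm (M : Matrix (Fin k) (Fin k) ℂ) (x : EuclideanSpace ℂ (Fin k)) : ℝ :=
  RCLike.re (star (WithLp.equiv 2 _ x) ⬝ᵥ (M *ᵥ WithLp.equiv 2 _ x))

lemma quadForm_add (M N : Matrix (Fin k) (Fin k) ℂ) (x : EuclideanSpace ℂ (Fin k)) :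
    quadForm (M + N) x = quadForm M x + quadForm N x := by
  simp [quadForm, add_mulVec, dotProduct_add]

lemma inner_mulVec_eigen {M : Matrix (Fin k) (Fin k) ℂ} (hM : M.IsHermitian)
    (x : EuclideanSpace ℂ (Fin k)) (m : Fin k) :
    (inner ℂ (hM.eigenvectorBasis m)
      ((WithLp.equiv 2 _).symm (M *ᵥ WithLp.equiv 2 _ x)) : ℂ)
      = (hM.eigenvalues m : ℂ) * hM.eigenvectorBasis.repr x m := by
  have h1 : (inner ℂ (hM.eigenvectorBasis m)
      ((WithLp.equiv 2 _).symm (M *ᵥ WithLp.equiv 2 _ x)) : ℂ)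
      = star (⇑(hM.eigenvectorBasis m)) ⬝ᵥ (M *ᵥ WithLp.equiv 2 _ x) := by rw [EuclideanSpace.inner_eq_star_dotProduct, dotProduct_comm]; rfl
  have h2 : star (⇑(hM.eigenvectorBasis m)) ᵥ* M = star (M *ᵥ ⇑(hM.eigenvectorBasis m)) := by
    rw [star_mulVec, hM.eq]
  rw [h1, dotProduct_mulVec, h2, hM.mulVec_eigenvectorBasis, star_smul,
    smul_dotProduct, star_trivial]
  have h4 : star (⇑(hM.eigenvectorBasis m)) ⬝ᵥ
      (WithLp.equiv 2 (Fin k → ℂ)) x = (inner ℂ (hM.eigenvectorBasis m) x : ℂ) := by rw [EuclideanSpace.inner_eq_star_dotProduct, dotProduct_comm]; rfl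
  rw [h4, ← hM.eigenvectorBasis.repr_apply_apply, Complex.real_smul]

lemma quadForm_eq_sum {M : Matrix (Fin k) (Fin k) ℂ} (hM : M.IsHermitian)
    (x : EuclideanSpace ℂ (Fin k)) :
    quadForm M x = ∑ m, hM.eigenvalues m * ‖hM.eigenvectorBasis.repr x m‖ ^ 2 := by
  set b := hM.eigenvectorBasis with hb
  set y : EuclideanSpace ℂ (Fin k) := (WithLp.equiv 2 _).symm (M *ᵥ WithLp.equiv 2 _ x) with hy
  have h0 : quadForm M x = RCLike.re (inner ℂ x y : ℂ) := by rw [EuclideanSpace.inner_eq_star_dotProduct, dotProduct_comm]; rfl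
  have h1 : (inner ℂ x y : ℂ) = ∑ m, (inner ℂ x (b m) : ℂ) * (inner ℂ (b m) y : ℂ) :=
    (b.sum_inner_mul_inner x y).symm
  have h2 : ∀ m, (inner ℂ x (b m) : ℂ) * (inner ℂ (b m) y : ℂ)
      = ((hM.eigenvalues m * ‖b.repr x m‖ ^ 2 : ℝ) : ℂ) := by
    intro m
    rw [hy, inner_mulVec_eigen hM x m, ← inner_conj_symm, ← b.repr_apply_apply x m]
    set c := b.repr x m with hc
    have hcc : c * (starRingEnd ℂ) c = (‖c‖ : ℂ) ^ 2 := Complex.mul_conj' c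
    calc (starRingEnd ℂ) c * ((hM.eigenvalues m : ℂ) * c)
        = (hM.eigenvalues m : ℂ) * (c * (starRingEnd ℂ) c) := by ring
      _ = ((hM.eigenvalues m * ‖c‖ ^ 2 : ℝ) : ℂ) := by rw [hcc]; push_cast; ring
  rw [h0, h1, Finset.sum_congr rfl (fun m _ => h2 m), ← Complex.ofReal_sum]
  exact Complex.ofReal_re _

lemma norm_sq_eq_sum_repr (b : OrthonormalBasis (Fin k) ℂ (EuclideanSpace ℂ (Fin k)))
    (x : EuclideanSpace ℂ (Fin k)) :
    ‖x‖ ^ 2 = ∑ m, ‖b.repr x m‖ ^ 2 := by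
  rw [← b.repr.norm_map x, EuclideanSpace.norm_eq, Real.sq_sqrt (by positivity)]

lemma repr_eq_zero_of_not_mem {M : Matrix (Fin k) (Fin k) ℂ} (hM : M.IsHermitian)
    (s : Finset (Fin k)) (x : EuclideanSpace ℂ (Fin k))
    (hx : x ∈ Submodule.span ℂ (hM.eigenvectorBasis '' (s : Set (Fin k))))
    {m : Fin k} (hm : m ∉ s) : hM.eigenvectorBasis.repr x m = 0 := by
  set b := hM.eigenvectorBasis
  rw [b.repr_apply_apply]
  refine Submodule.span_induction ?_ ?_ ?_ ?_ hx
  · rintro y ⟨l, hl, rfl⟩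
    exact b.orthonormal.2 (fun h => hm (h ▸ hl))
  · exact inner_zero_right _
  · intro y z _ _ hy hz; rw [inner_add_right, hy, hz, add_zero]
  · intro c y _ hy; rw [inner_smul_right, hy, mul_zero]

lemma quadForm_ge {M : Matrix (Fin k) (Fin k) ℂ} (hM : M.IsHermitian)
    (s : Finset (Fin k)) (x : EuclideanSpace ℂ (Fin k))
    (hx : x ∈ Submodule.span ℂ (hM.eigenvectorBasis '' (s : Set (Fin k))))
    (c : ℝ) (hc : ∀ m ∈ s, c ≤ hM.eigenvalues m) :
    c * ‖x‖ ^ 2 ≤ quadForm M x := by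
  rw [quadForm_eq_sum hM, norm_sq_eq_sum_repr hM.eigenvectorBasis, Finset.mul_sum]
  have hz : ∀ m ∈ (univ : Finset (Fin k)), m ∉ s → hM.eigenvectorBasis.repr x m = 0 :=
    fun m _ hm => repr_eq_zero_of_not_mem hM s x hx hm
  rw [← Finset.sum_subset (Finset.subset_univ s) (by intro m hm h; rw [hz m hm h]; simp),
    ← Finset.sum_subset (Finset.subset_univ s) (by intro m hm h; rw [hz m hm h]; simp)]
  exact Finset.sum_le_sum fun m hm =>
    mul_le_mul_of_nonneg_right (hc m hm) (by positivity)

lemma quadForm_le {M : Matrix (Fin k) (Fin k) ℂ} (hM : M.IsHermitian)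
    (s : Finset (Fin k)) (x : EuclideanSpace ℂ (Fin k))
    (hx : x ∈ Submodule.span ℂ (hM.eigenvectorBasis '' (s : Set (Fin k))))
    (c : ℝ) (hc : ∀ m ∈ s, hM.eigenvalues m ≤ c) :
    quadForm M x ≤ c * ‖x‖ ^ 2 := by
  rw [quadForm_eq_sum hM, norm_sq_eq_sum_repr hM.eigenvectorBasis, Finset.mul_sum]
  have hz : ∀ m ∈ (univ : Finset (Fin k)), m ∉ s → hM.eigenvectorBasis.repr x m = 0 :=
    fun m _ hm => repr_eq_zero_of_not_mem hM s x hx hm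
  rw [← Finset.sum_subset (Finset.subset_univ s) (by intro m hm h; rw [hz m hm h]; simp),
    ← Finset.sum_subset (Finset.subset_univ s) (by intro m hm h; rw [hz m hm h]; simp)]
  exact Finset.sum_le_sum fun m hm =>
    mul_le_mul_of_nonneg_right (hc m hm) (by positivity)

lemma finrank_span_eigen {M : Matrix (Fin k) (Fin k) ℂ} (hM : M.IsHermitian)
    (s : Finset (Fin k)) :
    Module.finrank ℂ (Submodule.span ℂ (hM.eigenvectorBasis '' (s : Set (Fin k)))) = s.card := by
  rw [Set.image_eq_range]
  have li : LinearIndependent ℂ (fun m : (s : Set (Fin k)) => hM.eigenvectorBasis (m : Fin k)) :=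
    hM.eigenvectorBasis.orthonormal.linearIndependent.comp _ Subtype.val_injective
  rw [finrank_span_eq_card li]
  simp

lemma finrank_inf_ge (V W : Submodule ℂ (EuclideanSpace ℂ (Fin k))) :
    Module.finrank ℂ V + Module.finrank ℂ W - k ≤ Module.finrank ℂ (V ⊓ W : Submodule ℂ _) := by
  have h := Submodule.finrank_sup_add_finrank_inf_eq V W
  have h2 : Module.finrank ℂ (V ⊔ W : Submodule ℂ _) ≤ k := by
    simpa [finrank_euclideanSpace] using Submodule.finrank_le (V ⊔ W)
  omega

end WeylAux

/-- Weyl inequality (lower bound): with decreasingly ordered eigenvalue sequences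
`μA, μB, μC` of the Hermitian matrices `A`, `B`, `A + B`, for `i ≤ j` (0-based) one has
`λ_i(A+B) ≥ λ_j(A) + λ_{k-1-(j-i)}(B)` (1-based: `λ_{k+i-j}(B)`). -/
theorem weyl_lower {k : ℕ} (A B : Matrix (Fin k) (Fin k) ℂ)
    (hA : A.IsHermitian) (hB : B.IsHermitian)
    (μA μB μC : Fin k → ℝ)
    (hμA : Antitone μA) (hμB : Antitone μB) (hμC : Antitone μC)
    (σA : Equiv.Perm (Fin k)) (hσA : μA = hA.eigenvalues ∘ σA)
    (σB : Equiv.Perm (Fin k)) (hσB : μB = hB.eigenvalues ∘ σB)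
    (σC : Equiv.Perm (Fin k)) (hσC : μC = (hA.add hB).eigenvalues ∘ σC)
    (i j : Fin k) (hij : i ≤ j) :
    μA j + μB ⟨k - 1 - (j.val - i.val), by have := j.isLt; omega⟩ ≤ μC i := by
  have hC : (A + B).IsHermitian := hA.add hB
  set j' : Fin k := ⟨k - 1 - (j.val - i.val), by have := j.isLt; omega⟩ with hj'
  have hj'val : j'.val = k - 1 - (j.val - i.val) := rfl
  set sA : Finset (Fin k) := (Iic j).image σA with hsA
  set sB : Finset (Fin k) := (Iic j').image σB with hsB
  set sC : Finset (Fin k) := (Ici i).image σC with hsC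
  have hi := i.isLt
  have hj := j.isLt
  have cardA : sA.card = j.val + 1 := by
    rw [hsA, Finset.card_image_of_injective _ σA.injective, Fin.card_Iic]
  have cardB : sB.card = k - (j.val - i.val) := by
    rw [hsB, Finset.card_image_of_injective _ σB.injective, Fin.card_Iic]
    omega
  have cardC : sC.card = k - i.val := by
    rw [hsC, Finset.card_image_of_injective _ σC.injective, Fin.card_Ici]
  set VA := Submodule.span ℂ (hA.eigenvectorBasis '' (sA : Set (Fin k))) with hVA
  set VB := Submodule.span ℂ (hB.eigenvectorBasis '' (sB : Set (Fin k))) with hVB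
  set VC := Submodule.span ℂ (hC.eigenvectorBasis '' (sC : Set (Fin k))) with hVC
  have dimA : Module.finrank ℂ VA = sA.card := by rw [hVA]; exact finrank_span_eigen hA sA
  have dimB : Module.finrank ℂ VB = sB.card := by rw [hVB]; exact finrank_span_eigen hB sB
  have dimC : Module.finrank ℂ VC = sC.card := by rw [hVC]; exact finrank_span_eigen hC sC
  have hpos : 0 < Module.finrank ℂ ((VA ⊓ VB) ⊓ VC : Submodule ℂ _) := by
    have h1 := finrank_inf_ge VA VB
    have h2 := finrank_inf_ge (VA ⊓ VB) VC
    omega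
  have hne : (VA ⊓ VB) ⊓ VC ≠ ⊥ := by
    intro hbot
    rw [hbot, finrank_bot] at hpos
    exact lt_irrefl 0 hpos
  obtain ⟨x, hxmem, hx0⟩ := Submodule.exists_mem_ne_zero_of_ne_bot hne
  rw [Submodule.mem_inf, Submodule.mem_inf] at hxmem
  obtain ⟨⟨hxA, hxB⟩, hxC⟩ := hxmem
  rw [hVA] at hxA
  rw [hVB] at hxB
  rw [hVC] at hxC
  have bA : μA j * ‖x‖ ^ 2 ≤ quadForm A x := by
    refine quadForm_ge hA sA x hxA _ ?_
    intro m hm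
    rw [hsA] at hm
    rcases Finset.mem_image.mp hm with ⟨l, hl, rfl⟩
    have hev : μA l = hA.eigenvalues (σA l) := by rw [hσA]; rfl
    rw [← hev]
    exact hμA (Finset.mem_Iic.mp hl)
  have bB : μB j' * ‖x‖ ^ 2 ≤ quadForm B x := by
    refine quadForm_ge hB sB x hxB _ ?_
    intro m hm
    rw [hsB] at hm
    rcases Finset.mem_image.mp hm with ⟨l, hl, rfl⟩
    have hev : μB l = hB.eigenvalues (σB l) := by rw [hσB]; rfl
    rw [← hev]
    exact hμB (Finset.mem_Iic.mp hl)
  have bC : quadForm (A + B) x ≤ μC i * ‖x‖ ^ 2 := by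
    refine quadForm_le hC sC x hxC _ ?_
    intro m hm
    rw [hsC] at hm
    rcases Finset.mem_image.mp hm with ⟨l, hl, rfl⟩
    have hev : μC l = hC.eigenvalues (σC l) := by rw [hσC]; rfl
    rw [← hev]
    exact hμC (Finset.mem_Ici.mp hl)
  have key : (μA j + μB j') * ‖x‖ ^ 2 ≤ μC i * ‖x‖ ^ 2 := by
    calc (μA j + μB j') * ‖x‖ ^ 2 = μA j * ‖x‖ ^ 2 + μB j' * ‖x‖ ^ 2 := by ring
    _ ≤ quadForm A x + quadForm B x := add_le_add bA bB
    _ = quadForm (A + B) x := (quadForm_add A B x).symm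
    _ ≤ μC i * ‖x‖ ^ 2 := bC
  have hn : (0 : ℝ) < ‖x‖ ^ 2 := pow_pos (norm_pos_iff.mpr hx0) 2
  exact le_of_mul_le_mul_right key hn
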